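/- For all natural numbers n, m with 1 ≤ n ≤ m − 1, the following explicit two-sided bound holds: (1 − n/m)^{n−m+1} · (1 − 1/m)^{m−1} · e^{1−n} ≤ ∏_{l=1}^{n} (1 − l/m) ≤ (1 − n/m)^{n−m} · (1 − 1/m)^{m−1} · e^{1−n}. -/

import Mathlib

open Finset

/-- Explicit two-sided bound for `∏_{l=1}^n (1 - l/m)` for naturals `1 ≤ n ≤ m-1`,
obtained by comparing `∑_{l=1}^n ln(1 - l/m)` with `∫_1^n ln(1 - x/m) dx`:
`(1-n/m)^{n-m+1}·(1-1/m)^{m-1}·e^{1-n} ≤ ∏_{l=1}^n (1-l/m)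
  ≤ (1-n/m)^{n-m}·(1-1/m)^{m-1}·e^{1-n}`. -/
theorem prod_one_sub_div_bounds
    (n m : ℕ) (hn : 1 ≤ n) (hnm : n ≤ m - 1) :
    (1 - (n : ℝ) / (m : ℝ)) ^ ((n : ℝ) - (m : ℝ) + 1) *
        (1 - 1 / (m : ℝ)) ^ ((m : ℝ) - 1) * Real.exp (1 - (n : ℝ)) ≤
      ∏ l ∈ Icc 1 n, (1 - (l : ℝ) / (m : ℝ)) ∧
    ∏ l ∈ Icc 1 n, (1 - (l : ℝ) / (m : ℝ)) ≤
      (1 - (n : ℝ) / (m : ℝ)) ^ ((n : ℝ) - (m : ℝ)) *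
        (1 - 1 / (m : ℝ)) ^ ((m : ℝ) - 1) * Real.exp (1 - (n : ℝ)) := by
  have hm1 : n + 1 ≤ m := by omega
  have hM : (n : ℝ) + 1 ≤ (m : ℝ) := by exact_mod_cast hm1
  have hMpos : (0 : ℝ) < (m : ℝ) := by
    have : 0 < m := by omega
    exact_mod_cast this
  have hN1 : (1 : ℝ) ≤ (n : ℝ) := by exact_mod_cast hn
  -- positivity of factors for x ∈ [1, n]
  have hpos : ∀ x : ℝ, x ≤ (n : ℝ) → 0 < 1 - x / (m : ℝ) := by
    intro x hx
    have : x / (m : ℝ) < 1 := by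
      rw [div_lt_one hMpos]; linarith
    linarith
  set f : ℝ → ℝ := fun x => Real.log (1 - x / (m : ℝ)) with hf
  -- antitonicity
  have hA : ∀ a : ℝ, ∀ b : ℝ, b ≤ (n : ℝ) → a ≤ b → f b ≤ f a := by
    intro a b hb hab
    exact Real.log_le_log (hpos b hb) (by gcongr)
  set a : ℕ := n - 1 with ha
  have hna : n = a + 1 := by omega
  have hcast : (1 : ℝ) + (a : ℕ) = (n : ℝ) := by
    rw [hna]; push_cast; ring
  have hanti : AntitoneOn f (Set.Icc (1 : ℝ) (1 + (a : ℕ))) := by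
    intro x hx y hy hxy
    exact hA x y (by rw [hcast] at hy; exact hy.2) hxy
  -- the integral value
  have hI : ∫ x in (1 : ℝ)..(n : ℝ), f x =
      (((n : ℝ) - m) * Real.log (1 - (n : ℝ) / m) - n) -
        (((1 : ℝ) - m) * Real.log (1 - 1 / (m : ℝ)) - 1) := by
    have := intervalIntegral.integral_eq_sub_of_hasDerivAt
      (f := fun x : ℝ => (x - (m : ℝ)) * Real.log (1 - x / (m : ℝ)) - x)
      (f' := f) (a := (1 : ℝ)) (b := (n : ℝ)) ?_ ?_
    · rw [this]
    · intro x hx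
      rw [Set.uIcc_of_le hN1] at hx
      have hxn : x ≤ (n : ℝ) := hx.2
      have hx0 : (1 : ℝ) - x / m ≠ 0 := ne_of_gt (hpos x hxn)
      have h1 : HasDerivAt (fun x : ℝ => 1 - x / (m : ℝ)) (-(1 / m)) x := by
        simpa using ((hasDerivAt_id x).div_const (m : ℝ)).const_sub 1
      have h2 : HasDerivAt (fun x : ℝ => Real.log (1 - x / (m : ℝ)))
          (-(1 / m) / (1 - x / m)) x := h1.log hx0
      have h3 : HasDerivAt (fun x : ℝ => x - (m : ℝ)) 1 x :=
        (hasDerivAt_id x).sub_const _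
      have h4 := (h3.mul h2).sub (hasDerivAt_id x)
      convert h4 using 1
      have hMne : (m : ℝ) ≠ 0 := ne_of_gt hMpos
      have hmx : (m : ℝ) - x ≠ 0 := by
        have := hpos x hxn
        intro h
        apply hx0
        field_simp
        linarith
      show f x = _
      rw [hf]
      field_simp
      have hq : (x - (m : ℝ)) / (m - x) = -1 := by rw [div_eq_iff (ne_of_gt (by linarith))]; ring
      rw [hq]; ring
      rfl
    · apply ContinuousOn.intervalIntegrable
      apply ContinuousOn.log
      · exact continuousOn_const.sub (continuousOn_id.div_const _)
      · intro x hx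
        rw [Set.uIcc_of_le hN1] at hx
        exact ne_of_gt (hpos x hx.2)
  -- sum over Icc 1 n rewritten via range
  have hSsum : ∑ l ∈ Icc 1 n, f l = ∑ i ∈ Finset.range n, f ((1 : ℝ) + (i : ℕ)) := by
    have : Icc 1 n = Finset.Ico 1 (n + 1) := by rw [Finset.Ico_add_one_right_eq_Icc]
    rw [this, Finset.sum_Ico_eq_sum_range]
    simp only [Nat.add_sub_cancel]
    apply Finset.sum_congr rfl
    intro i _
    push_cast
    ring_nf
  -- lower comparison: I + f n ≤ S
  have hlow : (∫ x in (1 : ℝ)..(n : ℝ), f x) + f (n : ℝ) ≤ ∑ l ∈ Icc 1 n, f l := by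
    have h := hanti.integral_le_sum
    have hS : ∑ l ∈ Icc 1 n, f l
        = (∑ i ∈ Finset.range a, f ((1 : ℝ) + (i : ℕ))) + f ((1 : ℝ) + (a : ℕ)) := by
      rw [hSsum, hna, Finset.sum_range_succ]
    have hfa : f ((1 : ℝ) + (a : ℕ)) = f (n : ℝ) := by rw [hcast]
    have hie : (∫ x in (1 : ℝ)..((1 : ℝ) + (a : ℕ)), f x) = ∫ x in (1 : ℝ)..(n : ℝ), f x := by
      rw [hcast]
    rw [hS, hfa]
    rw [hie] at h
    linarith
  -- upper comparison: S ≤ I + f 1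
  have hup : ∑ l ∈ Icc 1 n, f l ≤ (∫ x in (1 : ℝ)..(n : ℝ), f x) + f 1 := by
    have h := hanti.sum_le_integral
    have hS : ∑ l ∈ Icc 1 n, f l
        = (∑ i ∈ Finset.range a, f ((1 : ℝ) + ((i + 1 : ℕ) : ℕ))) + f ((1 : ℝ) + ((0 : ℕ) : ℝ)) := by
      rw [hSsum, hna, Finset.sum_range_succ']
    have hf0 : f ((1 : ℝ) + ((0 : ℕ) : ℝ)) = f 1 := by norm_num
    have hie : (∫ x in (1 : ℝ)..((1 : ℝ) + (a : ℕ)), f x) = ∫ x in (1 : ℝ)..(n : ℝ), f x := by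
      rw [hcast]
    rw [hS, hf0]
    rw [hie] at h
    linarith
  -- product = exp of sum
  have hprod : ∏ l ∈ Icc 1 n, (1 - (l : ℝ) / (m : ℝ)) = Real.exp (∑ l ∈ Icc 1 n, f l) := by
    rw [Real.exp_sum]
    apply Finset.prod_congr rfl
    intro l hl
    have hl' : (l : ℝ) ≤ (n : ℝ) := by
      exact_mod_cast (Finset.mem_Icc.mp hl).2
    rw [hf, Real.exp_log (hpos _ hl')]
  have h1n : (0 : ℝ) < 1 - (n : ℝ) / m := hpos _ le_rfl
  have h11 : (0 : ℝ) < 1 - 1 / (m : ℝ) := hpos 1 hN1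
  -- rewrite both bounds as exponentials
  have hLHS : (1 - (n : ℝ) / (m : ℝ)) ^ ((n : ℝ) - (m : ℝ) + 1) *
      (1 - 1 / (m : ℝ)) ^ ((m : ℝ) - 1) * Real.exp (1 - (n : ℝ)) =
      Real.exp (((n : ℝ) - m + 1) * Real.log (1 - (n : ℝ) / m) +
        ((m : ℝ) - 1) * Real.log (1 - 1 / (m : ℝ)) + (1 - (n : ℝ))) := by
    rw [Real.rpow_def_of_pos h1n, Real.rpow_def_of_pos h11, ← Real.exp_add, ← Real.exp_add]
    ring_nf
  have hRHS : (1 - (n : ℝ) / (m : ℝ)) ^ ((n : ℝ) - (m : ℝ)) *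
      (1 - 1 / (m : ℝ)) ^ ((m : ℝ) - 1) * Real.exp (1 - (n : ℝ)) =
      Real.exp (((n : ℝ) - m) * Real.log (1 - (n : ℝ) / m) +
        ((m : ℝ) - 1) * Real.log (1 - 1 / (m : ℝ)) + (1 - (n : ℝ))) := by
    rw [Real.rpow_def_of_pos h1n, Real.rpow_def_of_pos h11, ← Real.exp_add, ← Real.exp_add]
    ring_nf
  have hlog1 : Real.log (1 - 1 / (m : ℝ)) ≤ 0 := by
    apply Real.log_nonpos (le_of_lt h11)
    have : 0 ≤ 1 / (m : ℝ) := by positivity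
    linarith
  constructor
  · rw [hprod, hLHS]
    apply Real.exp_le_exp.mpr
    have hfn : f (n : ℝ) = Real.log (1 - (n : ℝ) / m) := rfl
    rw [hI, hfn] at hlow
    linarith
  · rw [hprod, hRHS]
    apply Real.exp_le_exp.mpr
    have hf1 : f 1 = Real.log (1 - 1 / (m : ℝ)) := rfl
    rw [hI, hf1] at hup
    linarith
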